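/- With notation as in the residue fixed-point construction (R = ∪_i R_i, S the set of (n₀+N)-bounded-reachable configurations, N = |Q|·d), the set X = R ∪ (S ∩ Q×[n₀, n₀+N])/ℤ_d equals { (q, n mod d) : q ∈ Q, n ∈ reach(q), n ≥ n₀ }. -/

import Mathlib

/-- A one-dimensional branching vector addition system with states:
branching transitions `br`, unary transitions `un` with update in `{-1,0,1}`,
and final states `final`. -/
structure BVASS1 (Q : Type) where
  br : Q → Q → Q → Prop
  un : Q → ℤ → Q → Prop
  un_small : ∀ q z p, un q z p → z = -1 ∨ z = 0 ∨ z = 1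
  final : Q → Prop

/-- A finite binary tree with nodes given by a prefix-closed set of words over
`Bool` and labels in `Q × ℕ`. -/
structure BTree (Q : Type) where
  dom : Set (List Bool)
  label : List Bool → Q × ℕ
  finite : dom.Finite
  root_mem : ([] : List Bool) ∈ dom
  prefixClosed : ∀ ⦃u v : List Bool⦄, v ∈ dom → u <+: v → u ∈ dom

/-- `u` is a strict ancestor of `v`. -/
def StrictPrefix (u v : List Bool) : Prop := u <+: v ∧ u ≠ v

/-- `u` is the lowest common ancestor of `v` and `w`. -/
def IsLCA (u v w : List Bool) : Prop :=
  u <+: v ∧ u <+: w ∧ ∀ u', u' <+: v → u' <+: w → u' <+: u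

namespace BTree

variable {Q : Type}

def state (T : BTree Q) (u : List Bool) : Q := (T.label u).1

def counter (T : BTree Q) (u : List Bool) : ℕ := (T.label u).2

def IsLeaf (T : BTree Q) (u : List Bool) : Prop :=
  u ∈ T.dom ∧ ∀ b : Bool, u ++ [b] ∉ T.dom

/-- The subtree of `T` rooted at node `u`. -/
def subtree (T : BTree Q) (u : List Bool) (hu : u ∈ T.dom) : BTree Q where
  dom := {x | u ++ x ∈ T.dom}
  label := fun x => T.label (u ++ x)
  finite := Set.Finite.preimage
    (Function.Injective.injOn fun a b h => by simpa using h) T.finite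
  root_mem := by simpa using hu
  prefixClosed := by
    rintro a c hc ⟨t, rfl⟩
    exact T.prefixClosed hc ⟨t, by simp⟩

/-- All counter values in the tree are at most `j`. -/
def Bounded (T : BTree Q) (j : ℕ) : Prop := ∀ u ∈ T.dom, T.counter u ≤ j

/-- All counter values, except possibly the root's, are at most `j`. -/
def AlmostBounded (T : BTree Q) (j : ℕ) : Prop :=
  ∀ u ∈ T.dom, u ≠ [] → T.counter u ≤ j

/-- A node is increasing if it has a strict ancestor with the same state
and a strictly smaller counter value. -/
def Increasing (T : BTree Q) (v : List Bool) : Prop :=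
  ∃ u ∈ T.dom, StrictPrefix u v ∧ T.state u = T.state v ∧ T.counter u < T.counter v

/-- `u` is the anchor of the increasing node `v`: the maximal strict ancestor of `v`
with the same state and strictly smaller counter value. -/
def IsAnchorOf (T : BTree Q) (u v : List Bool) : Prop :=
  u ∈ T.dom ∧ StrictPrefix u v ∧ T.state u = T.state v ∧ T.counter u < T.counter v ∧
    ∀ u' ∈ T.dom, StrictPrefix u' v → T.state u' = T.state v →
      T.counter u' < T.counter v → u' <+: u

/-- The tree is exclusive: the least common ancestor of any two distinct increasing
leaves is a strict ancestor of at least one of their anchors. -/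
def Exclusive (T : BTree Q) : Prop :=
  ∀ v w, T.IsLeaf v → T.IsLeaf w → T.Increasing v → T.Increasing w → v ≠ w →
    ∀ a b l, T.IsAnchorOf a v → T.IsAnchorOf b w → IsLCA l v w →
      StrictPrefix l a ∨ StrictPrefix l b

end BTree

namespace BVASS1

variable {Q : Type}

/-- `T` is a partial reachability tree of `B`: at every inner node either a
branching transition splits the counter over two children, or a unary transition
changes the counter by `z` along a single-child edge. -/
def IsPRT (B : BVASS1 Q) (T : BTree Q) : Prop :=
  ∀ u ∈ T.dom, ¬ T.IsLeaf u →
    ((u ++ [false] ∈ T.dom ∧ u ++ [true] ∈ T.dom ∧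
        B.br (T.state u) (T.state (u ++ [false])) (T.state (u ++ [true])) ∧
        T.counter u = T.counter (u ++ [false]) + T.counter (u ++ [true])) ∨
     (u ++ [false] ∈ T.dom ∧ u ++ [true] ∉ T.dom ∧
        ∃ z : ℤ, B.un (T.state u) z (T.state (u ++ [false])) ∧
          (T.counter (u ++ [false]) : ℤ) = (T.counter u : ℤ) + z))

/-- `T` is a (full) reachability tree of `B`: a partial reachability tree all of
whose leaves are accepting (final state, counter zero). -/
def IsRT (B : BVASS1 Q) (T : BTree Q) : Prop :=
  B.IsPRT T ∧ ∀ u, T.IsLeaf u → B.final (T.state u) ∧ T.counter u = 0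

/-- The configuration `q(n)` is reachable. -/
def Reachable (B : BVASS1 Q) (q : Q) (n : ℕ) : Prop :=
  ∃ T : BTree Q, B.IsRT T ∧ T.label [] = (q, n)

/-- The reachability set of a control state. -/
def reachSet (B : BVASS1 Q) (q : Q) : Set ℕ := {n | B.Reachable q n}

/-- The configuration `q(n)` is coverable. -/
def Coverable (B : BVASS1 Q) (q : Q) (n : ℕ) : Prop :=
  ∃ m, n ≤ m ∧ B.Reachable q m

/-- `T` is expandable: exclusive, every leaf is accepting or increasing, and every
increasing leaf with its anchor induces a positive residue-reachability instance. -/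
def Expandable (B : BVASS1 Q) (T : BTree Q) : Prop :=
  T.Exclusive ∧
  (∀ v, T.IsLeaf v → (B.final (T.state v) ∧ T.counter v = 0) ∨ T.Increasing v) ∧
  (∀ v u, T.IsLeaf v → T.IsAnchorOf u v →
    ∃ l, B.Reachable (T.state v) l ∧ T.counter v ≤ l ∧
      l ≡ T.counter v [MOD T.counter v - T.counter u])

end BVASS1

namespace BVASS1

variable {Q : Type}

/-- `q(n)` has a `j`-bounded reachability tree. -/
def BoundedReachable (B : BVASS1 Q) (j : ℕ) (q : Q) (n : ℕ) : Prop :=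
  ∃ T : BTree Q, B.IsRT T ∧ T.Bounded j ∧ T.label [] = (q, n)

/-- `q(n)` has an almost `j`-bounded reachability tree (all nodes except possibly
the root have counter at most `j`). -/
def AlmostBoundedReachable (B : BVASS1 Q) (j : ℕ) (q : Q) (n : ℕ) : Prop :=
  ∃ T : BTree Q, B.IsRT T ∧ T.AlmostBounded j ∧ T.label [] = (q, n)

/-- The set `S` of configurations having a `j`-bounded reachability tree. -/
def Sset (B : BVASS1 Q) (j : ℕ) : Set (Q × ℕ) := {x | B.BoundedReachable j x.1 x.2}

/-- The residue `S/ℤ_d` of a set of configurations. -/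
def resid (d : ℕ) (S : Set (Q × ℕ)) : Set (Q × ℕ) :=
  {x | ∃ n, (x.1, n) ∈ S ∧ x.2 = n % d}

/-- `Δ(V)`: application of a unary transition backwards, modulo `d`. -/
def deltaUn (B : BVASS1 Q) (d : ℕ) (V : Set (Q × ℕ)) : Set (Q × ℕ) :=
  {x | x.2 < d ∧ ∃ z p r, B.un x.1 z p ∧ (p, r) ∈ V ∧
    (x.2 : ℤ) ≡ (r : ℤ) - z [ZMOD (d : ℤ)]}

/-- `Δ(V,W)`: application of a branching transition backwards, modulo `d`. -/
def deltaBr (B : BVASS1 Q) (d : ℕ) (V W : Set (Q × ℕ)) : Set (Q × ℕ) :=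
  {x | x.2 < d ∧ ∃ p₀ p₁ r₀ r₁, B.br x.1 p₀ p₁ ∧ (p₀, r₀) ∈ V ∧ (p₁, r₁) ∈ W ∧
    x.2 ≡ r₀ + r₁ [MOD d]}

/-- The sequence `R_i` of the residue fixed-point construction, where `nN` stands
for `n₀ + N` with `N = |Q| · d`. -/
def Rseq (B : BVASS1 Q) (nN d : ℕ) : ℕ → Set (Q × ℕ)
  | 0 => {x | x.2 < d ∧ ∃ n, x.2 = n % d ∧ nN ≤ n ∧ B.AlmostBoundedReachable nN x.1 n}
  | i + 1 =>
      Rseq B nN d i ∪ B.deltaUn d (Rseq B nN d i) ∪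
      B.deltaBr d (Rseq B nN d i) (resid d (B.Sset nN)) ∪
      B.deltaBr d (resid d (B.Sset nN)) (Rseq B nN d i) ∪
      B.deltaBr d (Rseq B nN d i) (Rseq B nN d i)

end BVASS1

namespace BTree

variable {Q : Type}

@[simp] lemma subtree_dom_mem (T : BTree Q) (u : List Bool) (hu : u ∈ T.dom) (x : List Bool) :
    x ∈ (T.subtree u hu).dom ↔ u ++ x ∈ T.dom := Iff.rfl

@[simp] lemma subtree_state (T : BTree Q) (u : List Bool) (hu : u ∈ T.dom) (x : List Bool) :
    (T.subtree u hu).state x = T.state (u ++ x) := rfl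

@[simp] lemma subtree_counter (T : BTree Q) (u : List Bool) (hu : u ∈ T.dom) (x : List Bool) :
    (T.subtree u hu).counter x = T.counter (u ++ x) := rfl

lemma isLeaf_subtree (T : BTree Q) (u : List Bool) (hu : u ∈ T.dom) (x : List Bool) :
    (T.subtree u hu).IsLeaf x ↔ T.IsLeaf (u ++ x) := by
  unfold IsLeaf
  simp only [subtree_dom_mem, List.append_assoc]

end BTree

namespace BVASS1

variable {Q : Type}

lemma isPRT_subtree {B : BVASS1 Q} {T : BTree Q} (h : B.IsPRT T) (u : List Bool)
    (hu : u ∈ T.dom) : B.IsPRT (T.subtree u hu) := by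
  intro x hx hleaf
  have := h (u ++ x) hx (by rwa [← BTree.isLeaf_subtree T u hu])
  simpa [List.append_assoc] using this

lemma isRT_subtree {B : BVASS1 Q} {T : BTree Q} (h : B.IsRT T) (u : List Bool)
    (hu : u ∈ T.dom) : B.IsRT (T.subtree u hu) := by
  refine ⟨isPRT_subtree h.1 u hu, fun x hx => ?_⟩
  have := h.2 (u ++ x) ((BTree.isLeaf_subtree T u hu x).1 hx)
  simpa using this

lemma reachable_of_mem {B : BVASS1 Q} {T : BTree Q} (h : B.IsRT T) {u : List Bool}
    (hu : u ∈ T.dom) : B.Reachable (T.state u) (T.counter u) :=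
  ⟨T.subtree u hu, isRT_subtree h u hu, by show T.label (u ++ []) = _; rw [List.append_nil]; rfl⟩

end BVASS1
namespace BVASS1

variable {Q : Type}

/-- Graft a single subtree below a new root via a unary transition. -/
def graft1 (q : Q) (n : ℕ) (T : BTree Q) : BTree Q where
  dom := insert [] (List.cons false '' T.dom)
  label := fun u => match u with
    | [] => (q, n)
    | _ :: x => T.label x
  finite := (T.finite.image _).insert _
  root_mem := Set.mem_insert _ _
  prefixClosed := by
    rintro u v hv huv
    rcases hv with rfl | ⟨x, hx, rfl⟩
    · rw [List.prefix_nil.mp huv]; exact Set.mem_insert _ _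
    · match u, huv with
      | [], _ => exact Set.mem_insert _ _
      | b :: u', huv =>
        obtain ⟨hb, hu'⟩ := List.cons_prefix_cons.mp huv
        subst hb
        exact Set.mem_insert_iff.mpr (Or.inr ⟨u', T.prefixClosed hx hu', rfl⟩)

@[simp] lemma graft1_mem_cons (q : Q) (n : ℕ) (T : BTree Q) (b : Bool) (x : List Bool) :
    b :: x ∈ (graft1 q n T).dom ↔ b = false ∧ x ∈ T.dom := by
  simp only [graft1, Set.mem_insert_iff, Set.mem_image]
  constructor
  · rintro (h | ⟨y, hy, h⟩)
    · exact absurd h (by simp)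
    · cases h; exact ⟨rfl, hy⟩
  · rintro ⟨rfl, hx⟩; exact Or.inr ⟨x, hx, rfl⟩

@[simp] lemma graft1_root_mem (q : Q) (n : ℕ) (T : BTree Q) :
    [] ∈ (graft1 q n T).dom := Set.mem_insert _ _

@[simp] lemma graft1_label_nil (q : Q) (n : ℕ) (T : BTree Q) :
    (graft1 q n T).label [] = (q, n) := rfl

@[simp] lemma graft1_label_cons (q : Q) (n : ℕ) (T : BTree Q) (b : Bool) (x : List Bool) :
    (graft1 q n T).label (b :: x) = T.label x := rfl

lemma graft1_isRT {B : BVASS1 Q} {T : BTree Q} (hT : B.IsRT T) {q : Q} {n : ℕ} {z : ℤ}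
    (hun : B.un q z (T.state [])) (hz : (T.counter [] : ℤ) = (n : ℤ) + z) :
    B.IsRT (graft1 q n T) := by
  constructor
  · intro u hu hleaf
    match u with
    | [] =>
      right
      refine ⟨by simp [T.root_mem], by simp, z, ?_, ?_⟩
      · show B.un ((graft1 q n T).label []).1 z ((graft1 q n T).label ([] ++ [false])).1
        simpa [BTree.state] using hun
      · show ((T.label []).2 : ℤ) = (((q, n) : Q × ℕ).2 : ℤ) + z
        exact hz
    | b :: x =>
      obtain ⟨rfl, hx⟩ := (graft1_mem_cons q n T b x).mp hu
      have hxleaf : ¬ T.IsLeaf x := by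
        intro hl
        apply hleaf
        refine ⟨hu, fun b' hb' => ?_⟩
        rw [show (false :: x) ++ [b'] = false :: (x ++ [b']) from rfl,
          graft1_mem_cons] at hb'
        exact hl.2 b' hb'.2
      have := hT.1 x hx hxleaf
      rcases this with ⟨h1, h2, h3, h4⟩ | ⟨h1, h2, z', h3, h4⟩
      · left
        refine ⟨?_, ?_, h3, h4⟩ <;> simp [show ∀ b', (false :: x) ++ [b'] = false :: (x ++ [b']) from fun _ => rfl, graft1_mem_cons, h1, h2]
      · right
        refine ⟨?_, ?_, z', h3, h4⟩ <;> simp [show ∀ b', (false :: x) ++ [b'] = false :: (x ++ [b']) from fun _ => rfl, graft1_mem_cons, h1, h2]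
  · intro u hleaf
    match u with
    | [] =>
      exact absurd (hleaf.2 false (by simp [T.root_mem])) (by simp)
    | b :: x =>
      obtain ⟨rfl, hx⟩ := (graft1_mem_cons q n T b x).mp hleaf.1
      have : T.IsLeaf x := by
        refine ⟨hx, fun b' hb' => ?_⟩
        exact hleaf.2 b' (by rw [show (false :: x) ++ [b'] = false :: (x ++ [b']) from rfl, graft1_mem_cons]; exact ⟨rfl, hb'⟩)
      exact hT.2 x this

end BVASS1
namespace BVASS1

variable {Q : Type}

/-- Graft two subtrees below a new root via a branching transition. -/
def graft2 (q : Q) (n : ℕ) (T₀ T₁ : BTree Q) : BTree Q where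
  dom := insert [] (List.cons false '' T₀.dom ∪ List.cons true '' T₁.dom)
  label := fun u => match u with
    | [] => (q, n)
    | false :: x => T₀.label x
    | true :: x => T₁.label x
  finite := ((T₀.finite.image _).union (T₁.finite.image _)).insert _
  root_mem := Set.mem_insert _ _
  prefixClosed := by
    rintro u v hv huv
    rcases hv with rfl | (⟨x, hx, rfl⟩ | ⟨x, hx, rfl⟩) <;>
    [skip; skip; skip]
    · rw [List.prefix_nil.mp huv]; exact Set.mem_insert _ _
    · match u, huv with
      | [], _ => exact Set.mem_insert _ _
      | b :: u', huv =>
        obtain ⟨hb, hu'⟩ := List.cons_prefix_cons.mp huv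
        subst hb
        exact Set.mem_insert_iff.mpr (Or.inr (Or.inl ⟨u', T₀.prefixClosed hx hu', rfl⟩))
    · match u, huv with
      | [], _ => exact Set.mem_insert _ _
      | b :: u', huv =>
        obtain ⟨hb, hu'⟩ := List.cons_prefix_cons.mp huv
        subst hb
        exact Set.mem_insert_iff.mpr (Or.inr (Or.inr ⟨u', T₁.prefixClosed hx hu', rfl⟩))

@[simp] lemma graft2_mem_cons (q : Q) (n : ℕ) (T₀ T₁ : BTree Q) (b : Bool) (x : List Bool) :
    b :: x ∈ (graft2 q n T₀ T₁).dom ↔ (b = false ∧ x ∈ T₀.dom) ∨ (b = true ∧ x ∈ T₁.dom) := by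
  simp only [graft2, Set.mem_insert_iff, Set.mem_union, Set.mem_image]
  constructor
  · rintro (h | (⟨y, hy, h⟩ | ⟨y, hy, h⟩))
    · exact absurd h (by simp)
    · cases h; exact Or.inl ⟨rfl, hy⟩
    · cases h; exact Or.inr ⟨rfl, hy⟩
  · rintro (⟨rfl, hx⟩ | ⟨rfl, hx⟩)
    · exact Or.inr (Or.inl ⟨x, hx, rfl⟩)
    · exact Or.inr (Or.inr ⟨x, hx, rfl⟩)

@[simp] lemma graft2_label_nil (q : Q) (n : ℕ) (T₀ T₁ : BTree Q) :
    (graft2 q n T₀ T₁).label [] = (q, n) := rfl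

@[simp] lemma graft2_label_false (q : Q) (n : ℕ) (T₀ T₁ : BTree Q) (x : List Bool) :
    (graft2 q n T₀ T₁).label (false :: x) = T₀.label x := rfl

@[simp] lemma graft2_label_true (q : Q) (n : ℕ) (T₀ T₁ : BTree Q) (x : List Bool) :
    (graft2 q n T₀ T₁).label (true :: x) = T₁.label x := rfl

lemma graft2_isRT {B : BVASS1 Q} {T₀ T₁ : BTree Q} (h₀ : B.IsRT T₀) (h₁ : B.IsRT T₁)
    {q : Q} {n : ℕ} (hbr : B.br q (T₀.state []) (T₁.state []))
    (hn : n = T₀.counter [] + T₁.counter []) :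
    B.IsRT (graft2 q n T₀ T₁) := by
  have hc : ∀ (b : Bool) (x : List Bool) (b' : Bool), (b :: x) ++ [b'] = b :: (x ++ [b']) :=
    fun _ _ _ => rfl
  constructor
  · intro u hu hleaf
    match u with
    | [] =>
      left
      refine ⟨by simp [T₀.root_mem], by simp [T₁.root_mem], ?_, ?_⟩
      · show B.br ((graft2 q n T₀ T₁).label []).1 _ _
        simpa [BTree.state] using hbr
      · show (((q, n) : Q × ℕ)).2 = _
        simpa [BTree.counter] using hn
    | false :: x =>
      have hx : x ∈ T₀.dom := by simpa using (graft2_mem_cons q n T₀ T₁ false x).mp hu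
      have hxleaf : ¬ T₀.IsLeaf x := by
        intro hl
        exact hleaf ⟨hu, fun b' hb' => by
          rw [hc, graft2_mem_cons] at hb'
          rcases hb' with ⟨_, h⟩ | ⟨h, _⟩
          · exact hl.2 b' h
          · simp at h⟩
      have := h₀.1 x hx hxleaf
      rcases this with ⟨h1, h2, h3, h4⟩ | ⟨h1, h2, z', h3, h4⟩
      · left; refine ⟨?_, ?_, h3, h4⟩ <;> simp [hc, h1, h2]
      · right; refine ⟨?_, ?_, z', h3, h4⟩ <;> simp [hc, h1, h2]
    | true :: x =>
      have hx : x ∈ T₁.dom := by simpa using (graft2_mem_cons q n T₀ T₁ true x).mp hu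
      have hxleaf : ¬ T₁.IsLeaf x := by
        intro hl
        exact hleaf ⟨hu, fun b' hb' => by
          rw [hc, graft2_mem_cons] at hb'
          rcases hb' with ⟨h, _⟩ | ⟨_, h⟩
          · simp at h
          · exact hl.2 b' h⟩
      have := h₁.1 x hx hxleaf
      rcases this with ⟨h1, h2, h3, h4⟩ | ⟨h1, h2, z', h3, h4⟩
      · left; refine ⟨?_, ?_, h3, h4⟩ <;> simp [hc, h1, h2]
      · right; refine ⟨?_, ?_, z', h3, h4⟩ <;> simp [hc, h1, h2]
  · intro u hleaf
    match u with
    | [] =>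
      exact absurd (hleaf.2 false (by simp [T₀.root_mem])) (by simp)
    | false :: x =>
      have hx : x ∈ T₀.dom := by simpa using (graft2_mem_cons q n T₀ T₁ false x).mp hleaf.1
      refine h₀.2 x ⟨hx, fun b' hb' => ?_⟩
      exact hleaf.2 b' (by rw [hc, graft2_mem_cons]; exact Or.inl ⟨rfl, hb'⟩)
    | true :: x =>
      have hx : x ∈ T₁.dom := by simpa using (graft2_mem_cons q n T₀ T₁ true x).mp hleaf.1
      refine h₁.2 x ⟨hx, fun b' hb' => ?_⟩
      exact hleaf.2 b' (by rw [hc, graft2_mem_cons]; exact Or.inr ⟨rfl, hb'⟩)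

end BVASS1
namespace BVASS1

variable {Q : Type}

lemma reachable_un {B : BVASS1 Q} {q p : Q} {z : ℤ} {n m : ℕ} (hun : B.un q z p)
    (hp : B.Reachable p n) (hm : (n : ℤ) = (m : ℤ) + z) : B.Reachable q m := by
  obtain ⟨T, hT, hlab⟩ := hp
  have hs : T.state [] = p := by rw [BTree.state, hlab]
  have hc : T.counter [] = n := by rw [BTree.counter, hlab]
  exact ⟨graft1 q m T, graft1_isRT hT (hs ▸ hun) (by rw [hc]; exact hm), rfl⟩

lemma reachable_br {B : BVASS1 Q} {q p₀ p₁ : Q} {a b : ℕ} (hbr : B.br q p₀ p₁)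
    (h₀ : B.Reachable p₀ a) (h₁ : B.Reachable p₁ b) : B.Reachable q (a + b) := by
  obtain ⟨T₀, hT₀, hlab₀⟩ := h₀
  obtain ⟨T₁, hT₁, hlab₁⟩ := h₁
  have hs₀ : T₀.state [] = p₀ := by rw [BTree.state, hlab₀]
  have hs₁ : T₁.state [] = p₁ := by rw [BTree.state, hlab₁]
  have hc₀ : T₀.counter [] = a := by rw [BTree.counter, hlab₀]
  have hc₁ : T₁.counter [] = b := by rw [BTree.counter, hlab₁]
  exact ⟨graft2 q (a + b) T₀ T₁,
    graft2_isRT hT₀ hT₁ (by rw [hs₀, hs₁]; exact hbr) (by rw [hc₀, hc₁]), rfl⟩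

lemma mem_reachable_of_sset {B : BVASS1 Q} {nN : ℕ} {p : Q} {m : ℕ}
    (h : (p, m) ∈ B.Sset nN) : B.Reachable p m := by
  obtain ⟨T, hT, _, hlab⟩ := h
  exact ⟨T, hT, hlab⟩

lemma rseq_lt_d {B : BVASS1 Q} {nN d : ℕ} : ∀ i, ∀ x ∈ B.Rseq nN d i, x.2 < d := by
  intro i
  induction i with
  | zero => exact fun x hx => hx.1
  | succ i ih =>
    rintro x ((((hx | hx) | hx) | hx) | hx)
    · exact ih x hx
    all_goals exact hx.1

lemma rseq_mono {B : BVASS1 Q} {nN d : ℕ} : Monotone (B.Rseq nN d) := by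
  apply monotone_nat_of_le_succ
  intro i x hx
  exact Or.inl (Or.inl (Or.inl (Or.inl hx)))

private lemma nat_eq_mod_of_modEq {a b d : ℕ} (h : a ≡ b [MOD d]) (ha : a < d) :
    a = b % d := by
  rw [← Nat.mod_eq_of_lt ha]; exact h

lemma rseq_sound {B : BVASS1 Q} {nN d : ℕ} :
    ∀ i, i ≤ nN → ∀ x ∈ B.Rseq nN d i,
      ∃ n, B.Reachable x.1 n ∧ nN ≤ n + i ∧ x.2 = n % d := by
  intro i
  induction i with
  | zero =>
    rintro _ x ⟨hlt, n, hmod, hn, T, hT, _, hlab⟩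
    exact ⟨n, ⟨T, hT, hlab⟩, by omega, hmod⟩
  | succ i ih =>
    intro hii x hx
    have hii' : i ≤ nN := by omega
    rcases hx with (((hx | hx) | hx) | hx) | hx
    · obtain ⟨n, hr, hb, hm⟩ := ih hii' x hx
      exact ⟨n, hr, by omega, hm⟩
    · -- deltaUn
      obtain ⟨hlt, z, p, r, hun, hpr, hmod⟩ := hx
      obtain ⟨n, hr0, hb, hm0⟩ := ih hii' (p, r) hpr
      have hr : B.Reachable p n := hr0
      have hm : r = n % d := hm0
      have hn1 : 1 ≤ n ∨ z ≠ 1 := by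
        rcases B.un_small _ _ _ hun with rfl | rfl | rfl
        · right; decide
        · right; decide
        · left; omega
      set m : ℕ := ((n : ℤ) - z).toNat with hmdef
      have hmz : (n : ℤ) = (m : ℤ) + z := by
        rcases B.un_small _ _ _ hun with rfl | rfl | rfl <;> simp [hmdef] <;> omega
      refine ⟨m, reachable_un hun hr hmz, ?_, ?_⟩
      · rcases B.un_small _ _ _ hun with rfl | rfl | rfl <;> simp [hmdef] <;> omega
      · -- x.2 = m % d
        have h1 : (x.2 : ℤ) ≡ (m : ℤ) [ZMOD (d : ℤ)] := by
          calc (x.2 : ℤ) ≡ (r : ℤ) - z [ZMOD (d : ℤ)] := hmod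
            _ ≡ (n : ℤ) - z [ZMOD (d : ℤ)] := by
                refine Int.ModEq.sub_right z ?_
                show (r : ℤ) ≡ (n : ℤ) [ZMOD (d : ℤ)]
                rw [hm]
                push_cast [Int.natCast_mod]
                exact (Int.emod_emod_of_dvd _ dvd_rfl)
            _ = (m : ℤ) := by omega
        have h2 : x.2 % d = m % d := by
          have := h1
          unfold Int.ModEq at this
          rw [← Int.natCast_mod, ← Int.natCast_mod] at this
          exact_mod_cast this
        rw [← h2, Nat.mod_eq_of_lt hlt]
    · -- deltaBr Rseq residS
      obtain ⟨hlt, p₀, p₁, r₀, r₁, hbr, h₀, h₁, hmod⟩ := hx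
      obtain ⟨n, hr0, hb, hm0⟩ := ih hii' (p₀, r₀) h₀
      have hr : B.Reachable p₀ n := hr0
      have hm : r₀ = n % d := hm0
      obtain ⟨m, hmS0, hr₁0⟩ := h₁
      have hmS : (p₁, m) ∈ B.Sset nN := hmS0
      have hr₁ : r₁ = m % d := hr₁0
      refine ⟨n + m, reachable_br hbr hr (mem_reachable_of_sset hmS), by omega, ?_⟩
      refine nat_eq_mod_of_modEq ?_ hlt
      calc x.2 ≡ r₀ + r₁ [MOD d] := hmod
        _ = n % d + m % d := by rw [hm, hr₁]
        _ ≡ n + m [MOD d] := Nat.ModEq.add (Nat.mod_modEq n d) (Nat.mod_modEq m d)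
    · -- deltaBr residS Rseq
      obtain ⟨hlt, p₀, p₁, r₀, r₁, hbr, h₀, h₁, hmod⟩ := hx
      obtain ⟨m, hmS0, hr₀0⟩ := h₀
      have hmS : (p₀, m) ∈ B.Sset nN := hmS0
      have hr₀ : r₀ = m % d := hr₀0
      obtain ⟨n, hr0, hb, hm0⟩ := ih hii' (p₁, r₁) h₁
      have hr : B.Reachable p₁ n := hr0
      have hm : r₁ = n % d := hm0
      refine ⟨m + n, reachable_br hbr (mem_reachable_of_sset hmS) hr, by omega, ?_⟩
      refine nat_eq_mod_of_modEq ?_ hlt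
      calc x.2 ≡ r₀ + r₁ [MOD d] := hmod
        _ = m % d + n % d := by rw [hm, hr₀]
        _ ≡ m + n [MOD d] := Nat.ModEq.add (Nat.mod_modEq m d) (Nat.mod_modEq n d)
    · -- deltaBr Rseq Rseq
      obtain ⟨hlt, p₀, p₁, r₀, r₁, hbr, h₀, h₁, hmod⟩ := hx
      obtain ⟨n, hr0, hb, hm0⟩ := ih hii' (p₀, r₀) h₀
      have hr : B.Reachable p₀ n := hr0
      have hm : r₀ = n % d := hm0
      obtain ⟨n', hr2, hb', hm2⟩ := ih hii' (p₁, r₁) h₁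
      have hr' : B.Reachable p₁ n' := hr2
      have hm' : r₁ = n' % d := hm2
      refine ⟨n + n', reachable_br hbr hr hr', by omega, ?_⟩
      refine nat_eq_mod_of_modEq ?_ hlt
      calc x.2 ≡ r₀ + r₁ [MOD d] := hmod
        _ = n % d + n' % d := by rw [hm, hm']
        _ ≡ n + n' [MOD d] := Nat.ModEq.add (Nat.mod_modEq n d) (Nat.mod_modEq n' d)

end BVASS1
namespace BVASS1

variable {Q : Type}

lemma rseq_const_of_eq {B : BVASS1 Q} {nN d : ℕ} {j : ℕ}
    (h : B.Rseq nN d j = B.Rseq nN d (j + 1)) :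
    ∀ m, B.Rseq nN d (j + m) = B.Rseq nN d j := by
  intro m
  induction m with
  | zero => rfl
  | succ m ih =>
    have : B.Rseq nN d (j + m + 1) =
        B.Rseq nN d (j + m) ∪ B.deltaUn d (B.Rseq nN d (j + m)) ∪
        B.deltaBr d (B.Rseq nN d (j + m)) (resid d (B.Sset nN)) ∪
        B.deltaBr d (resid d (B.Sset nN)) (B.Rseq nN d (j + m)) ∪
        B.deltaBr d (B.Rseq nN d (j + m)) (B.Rseq nN d (j + m)) := rfl
    rw [show j + (m + 1) = j + m + 1 from rfl, this, ih]
    exact h.symm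

lemma rseq_stab {B : BVASS1 Q} [Fintype Q] {nN d : ℕ} :
    ∀ i, B.Rseq nN d i ⊆ B.Rseq nN d (Fintype.card Q * d) := by
  set K := Fintype.card Q * d with hK
  have hsub : ∀ i, B.Rseq nN d i ⊆ ↑((Finset.univ : Finset Q) ×ˢ Finset.range d) := by
    intro i x hx
    simp only [Finset.coe_product, Set.mem_prod, Finset.mem_coe, Finset.mem_univ,
      Finset.mem_range, true_and, Finset.coe_range, Set.mem_Iio]
    exact rseq_lt_d i x hx
  have hfin : ∀ i, (B.Rseq nN d i).Finite :=
    fun i => Set.Finite.subset (Finset.finite_toSet _) (hsub i)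
  have hcard : ∀ i, (B.Rseq nN d i).ncard ≤ K := by
    intro i
    calc (B.Rseq nN d i).ncard ≤ (↑((Finset.univ : Finset Q) ×ˢ Finset.range d) : Set (Q × ℕ)).ncard :=
          Set.ncard_le_ncard (hsub i) (Finset.finite_toSet _)
      _ = K := by rw [Set.ncard_coe_finset, Finset.card_product, Finset.card_univ,
          Finset.card_range]
  have hstable : ∃ j ≤ K, B.Rseq nN d j = B.Rseq nN d (j + 1) := by
    by_contra hno
    push_neg at hno
    have hgrow : ∀ j, j ≤ K + 1 → j ≤ (B.Rseq nN d j).ncard := by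
      intro j
      induction j with
      | zero => intro _; exact Nat.zero_le _
      | succ j ih =>
        intro hj
        have h1 : B.Rseq nN d j ⊂ B.Rseq nN d (j + 1) :=
          ssubset_of_subset_of_ne (rseq_mono (Nat.le_succ j)) (hno j (by omega))
        have := Set.ncard_lt_ncard h1 (hfin (j + 1))
        have := ih (by omega)
        omega
    have := hgrow (K + 1) le_rfl
    have := hcard (K + 1)
    omega
  obtain ⟨j, hjK, hj⟩ := hstable
  intro i x hx
  by_cases hi : i ≤ K
  · exact rseq_mono hi hx
  · have : B.Rseq nN d i = B.Rseq nN d j := by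
      have := rseq_const_of_eq hj (i - j)
      rwa [show j + (i - j) = i by omega] at this
    exact rseq_mono hjK (this ▸ hx)

end BVASS1
namespace BVASS1

variable {Q : Type}

private lemma int_mod_modEq (a d : ℕ) : ((a % d : ℕ) : ℤ) ≡ (a : ℤ) [ZMOD (d : ℤ)] := by
  push_cast [Int.natCast_mod]
  exact Int.emod_emod_of_dvd _ dvd_rfl

lemma subtree_ncard_lt (T : BTree Q) (w : List Bool) (hw : w ∈ T.dom) (hne : w ≠ []) :
    (T.subtree w hw).dom.ncard < T.dom.ncard := by
  have hinj : Function.Injective (fun x : List Bool => w ++ x) :=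
    fun a b h => by simpa using h
  have himg : (fun x : List Bool => w ++ x) '' (T.subtree w hw).dom ⊆ T.dom \ {[]} := by
    rintro _ ⟨x, hx, rfl⟩
    refine ⟨hx, ?_⟩
    simp only [Set.mem_singleton_iff]
    intro h
    exact hne (List.append_eq_nil_iff.mp h).1
  calc (T.subtree w hw).dom.ncard
      = ((fun x : List Bool => w ++ x) '' (T.subtree w hw).dom).ncard :=
        (Set.ncard_image_of_injective _ hinj).symm
    _ ≤ (T.dom \ {[]}).ncard := Set.ncard_le_ncard himg T.finite.diff
    _ < T.dom.ncard := Set.ncard_diff_singleton_lt_of_mem T.root_mem T.finite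

lemma claimC {B : BVASS1 Q} {nN d : ℕ} (hd : 1 ≤ d) :
    ∀ m (T : BTree Q), T.dom.ncard ≤ m → B.IsRT T →
      (∃ u ∈ T.dom, nN < T.counter u) →
      (T.state [], T.counter [] % d) ∈ ⋃ i, B.Rseq nN d i := by
  intro m
  induction m with
  | zero =>
    intro T hcard _ _
    have : 0 < T.dom.ncard := (Set.ncard_pos T.finite).mpr ⟨[], T.root_mem⟩
    omega
  | succ m IH =>
    intro T hcard hT hex
    -- choose a node of maximal length among those with big counter
    set A : Set (List Bool) := {u | u ∈ T.dom ∧ nN < T.counter u} with hA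
    have hAfin : A.Finite := T.finite.subset (fun u hu => hu.1)
    have hAne : A.Nonempty := by
      obtain ⟨u, hu, hcu⟩ := hex
      exact ⟨u, hu, hcu⟩
    obtain ⟨u, huA, humax⟩ := Set.exists_max_image A List.length hAfin hAne
    obtain ⟨hu, hcu⟩ := huA
    -- the subtree at u is almost bounded
    have habdd : (T.subtree u hu).AlmostBounded nN := by
      intro x hx hxne
      by_contra hgt
      push_neg at hgt
      have hxA : (u ++ x) ∈ A := ⟨hx, hgt⟩
      have := humax _ hxA
      simp only [List.length_append] at this
      have : x.length = 0 := by omega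
      exact hxne (List.eq_nil_of_length_eq_zero this)
    have hbase : (T.state u, T.counter u % d) ∈ B.Rseq nN d 0 := by
      refine ⟨Nat.mod_lt _ hd, T.counter u, rfl, le_of_lt hcu,
        T.subtree u hu, isRT_subtree hT u hu, habdd, ?_⟩
      show T.label (u ++ []) = _
      rw [List.append_nil]
      rfl
    -- climb from u to the root
    have climb : ∀ k (v : List Bool), v <+: u → u.length ≤ v.length + k →
        (T.state v, T.counter v % d) ∈ ⋃ i, B.Rseq nN d i := by
      intro k
      induction k with
      | zero =>
        intro v hpre hlen
        have : v = u := hpre.eq_of_length (le_antisymm hpre.length_le (by omega))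
        subst this
        exact Set.mem_iUnion.mpr ⟨0, hbase⟩
      | succ k ihk =>
        intro v hpre hlen
        by_cases hvu : v = u
        · subst hvu
          exact Set.mem_iUnion.mpr ⟨0, hbase⟩
        · have hv_mem : v ∈ T.dom := T.prefixClosed hu hpre
          obtain ⟨t, ht⟩ := hpre
          have htne : t ≠ [] := by rintro rfl; exact hvu (by simpa using ht)
          obtain ⟨b, t', rfl⟩ : ∃ b t', t = b :: t' := by
            cases t with
            | nil => exact absurd rfl htne
            | cons b t' => exact ⟨b, t', rfl⟩
          have hchild_pre : v ++ [b] <+: u := ⟨t', by rw [← ht]; simp⟩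
          have hchild_mem : v ++ [b] ∈ T.dom := T.prefixClosed hu hchild_pre
          have hnotleaf : ¬ T.IsLeaf v := fun hl => hl.2 b hchild_mem
          have hlen' : u.length ≤ (v ++ [b]).length + k := by
            have : u.length = v.length + 1 + t'.length := by
              rw [← ht]; simp; omega
            simp only [List.length_append, List.length_cons, List.length_nil]
            omega
          rcases hT.1 v hv_mem hnotleaf with ⟨hf, htm, hbr, hsum⟩ | ⟨hf, htnot, z, hun, hz⟩
          · -- branching node
            have hchild := ihk (v ++ [b]) hchild_pre hlen'
            obtain ⟨i, hchild⟩ := Set.mem_iUnion.mp hchild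
            -- sibling
            have key : ∀ (c s : List Bool), c = v ++ [b] → s = v ++ [!b] → s ∈ T.dom →
                (T.state s, T.counter s % d) ∈ resid d (B.Sset nN) ∨
                ∃ j, (T.state s, T.counter s % d) ∈ B.Rseq nN d j := by
              intro c s hc hs hsmem
              by_cases hbdd : ∀ x ∈ (T.subtree s hsmem).dom, (T.subtree s hsmem).counter x ≤ nN
              · left
                refine ⟨T.counter s, ⟨T.subtree s hsmem, isRT_subtree hT s hsmem, hbdd, ?_⟩, rfl⟩
                show T.label (s ++ []) = _
                rw [List.append_nil]
                rfl
              · right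
                push_neg at hbdd
                have hsne : s ≠ [] := by rw [hs]; simp
                have hcard' : (T.subtree s hsmem).dom.ncard ≤ m := by
                  have := subtree_ncard_lt T s hsmem hsne
                  omega
                have := IH (T.subtree s hsmem) hcard' (isRT_subtree hT s hsmem)
                  (by obtain ⟨x, hx1, hx2⟩ := hbdd; exact ⟨x, hx1, hx2⟩)
                rw [BTree.subtree_state, BTree.subtree_counter, List.append_nil] at this
                exact Set.mem_iUnion.mp this
            have hmodsum : T.counter v % d ≡
                T.counter (v ++ [false]) % d + T.counter (v ++ [true]) % d [MOD d] := by
              calc T.counter v % d ≡ T.counter v [MOD d] := Nat.mod_modEq _ d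
                _ = T.counter (v ++ [false]) + T.counter (v ++ [true]) := hsum
                _ ≡ T.counter (v ++ [false]) % d + T.counter (v ++ [true]) % d [MOD d] :=
                  (Nat.ModEq.add (Nat.mod_modEq _ d) (Nat.mod_modEq _ d)).symm
            cases b with
            | false =>
              rcases key (v ++ [false]) (v ++ [true]) rfl rfl htm with hsib | ⟨j, hsib⟩
              · refine Set.mem_iUnion.mpr ⟨i + 1, Or.inl (Or.inl (Or.inr ?_))⟩
                exact ⟨Nat.mod_lt _ hd, T.state (v ++ [false]), T.state (v ++ [true]),
                  T.counter (v ++ [false]) % d, T.counter (v ++ [true]) % d,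
                  hbr, hchild, hsib, hmodsum⟩
              · refine Set.mem_iUnion.mpr ⟨max i j + 1, Or.inr ?_⟩
                exact ⟨Nat.mod_lt _ hd, T.state (v ++ [false]), T.state (v ++ [true]),
                  T.counter (v ++ [false]) % d, T.counter (v ++ [true]) % d,
                  hbr, rseq_mono (le_max_left i j) hchild,
                  rseq_mono (le_max_right i j) hsib, hmodsum⟩
            | true =>
              rcases key (v ++ [true]) (v ++ [false]) rfl rfl hf with hsib | ⟨j, hsib⟩
              · refine Set.mem_iUnion.mpr ⟨i + 1, Or.inl (Or.inr ?_)⟩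
                exact ⟨Nat.mod_lt _ hd, T.state (v ++ [false]), T.state (v ++ [true]),
                  T.counter (v ++ [false]) % d, T.counter (v ++ [true]) % d,
                  hbr, hsib, hchild, hmodsum⟩
              · refine Set.mem_iUnion.mpr ⟨max i j + 1, Or.inr ?_⟩
                exact ⟨Nat.mod_lt _ hd, T.state (v ++ [false]), T.state (v ++ [true]),
                  T.counter (v ++ [false]) % d, T.counter (v ++ [true]) % d,
                  hbr, rseq_mono (le_max_right i j) hsib,
                  rseq_mono (le_max_left i j) hchild, hmodsum⟩
          · -- unary node
            have hbf : b = false := by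
              cases b with
              | false => rfl
              | true => exact absurd hchild_mem htnot
            subst hbf
            have hchild := ihk (v ++ [false]) hchild_pre hlen'
            obtain ⟨i, hchild⟩ := Set.mem_iUnion.mp hchild
            refine Set.mem_iUnion.mpr ⟨i + 1, Or.inl (Or.inl (Or.inl (Or.inr ?_)))⟩
            refine ⟨Nat.mod_lt _ hd, z, T.state (v ++ [false]),
              T.counter (v ++ [false]) % d, hun, hchild, ?_⟩
            calc ((T.counter v % d : ℕ) : ℤ)
                ≡ (T.counter v : ℤ) [ZMOD (d : ℤ)] := int_mod_modEq _ d
              _ = (T.counter (v ++ [false]) : ℤ) - z := by omega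
              _ ≡ ((T.counter (v ++ [false]) % d : ℕ) : ℤ) - z [ZMOD (d : ℤ)] :=
                  Int.ModEq.sub_right z (int_mod_modEq _ d).symm
    have := climb u.length [] List.nil_prefix (by simp)
    exact this

end BVASS1
/-- Correctness of the residue reachability construction:
`X = R ∪ (S ∩ Q×[n₀, n₀+N])/ℤ_d` equals
`{ (q, n mod d) : n ∈ reach(q), n ≥ n₀ }`, where `N = |Q| · d`. -/
theorem stmt13 {Q : Type} [Fintype Q] (B : BVASS1 Q) (n₀ d : ℕ) (hd : 1 ≤ d) :
    (⋃ i, B.Rseq (n₀ + Fintype.card Q * d) d i) ∪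
        BVASS1.resid d
          {x ∈ B.Sset (n₀ + Fintype.card Q * d) |
            n₀ ≤ x.2 ∧ x.2 ≤ n₀ + Fintype.card Q * d}
      = {x : Q × ℕ | x.2 < d ∧ ∃ n, B.Reachable x.1 n ∧ n₀ ≤ n ∧ x.2 = n % d} := by
  set K := Fintype.card Q * d with hK
  set nN := n₀ + K with hnN
  ext x
  simp only [Set.mem_union, Set.mem_iUnion, Set.mem_setOf_eq]
  constructor
  · rintro (⟨i, hx⟩ | ⟨mn, ⟨hS, hlow, hhigh⟩, hmod⟩)
    · have hxK : x ∈ B.Rseq nN d K := BVASS1.rseq_stab i hx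
      obtain ⟨n, hr, hb, hm⟩ := BVASS1.rseq_sound K (by omega) x hxK
      exact ⟨BVASS1.rseq_lt_d _ x hx, n, hr, by omega, hm⟩
    · refine ⟨hmod ▸ Nat.mod_lt _ hd, mn, BVASS1.mem_reachable_of_sset hS, hlow, hmod⟩
  · rintro ⟨hlt, n, hr, hn0, hmod⟩
    obtain ⟨T, hT, hlab⟩ := hr
    have hs : T.state [] = x.1 := by rw [BTree.state, hlab]
    have hc : T.counter [] = n := by rw [BTree.counter, hlab]
    by_cases hbig : ∃ u ∈ T.dom, nN < T.counter u
    · left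
      have := BVASS1.claimC hd T.dom.ncard T le_rfl hT hbig
      rw [hs, hc, ← hmod] at this
      obtain ⟨i, hi⟩ := Set.mem_iUnion.mp this
      exact ⟨i, by rwa [Prod.mk.eta] at hi⟩
    · right
      push_neg at hbig
      have hbdd : T.Bounded nN := fun u hu => hbig u hu
      have hle : n ≤ nN := hc ▸ hbig [] T.root_mem
      exact ⟨n, ⟨⟨T, hT, hbdd, hlab⟩, hn0, hle⟩, hmod⟩
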